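/- Let Σ_A = { λ ∈ ℤ_3 : for every n ≥ 0, the pair of 3-adic digits (d_{2n+1}, d_{2n}) of λ is (0,0) or (0,1) }. Then every λ ∈ Σ_A has all 3-adic digits in {0,1}, and moreover all 3-adic digits of 4·λ lie in {0,1}. -/

import Mathlib

/-- The `j`-th digit of the 3-adic expansion of `y`. -/
noncomputable def padicDigit (y : ℤ_[3]) (j : ℕ) : ℕ := y.appr (j + 1) / 3 ^ j % 3

lemma split0 (c : ℕ → ℕ) (m : ℕ) :
    ∑ i ∈ Finset.range (m + 1), c i * 3 ^ i
      = 3 * (∑ i ∈ Finset.range m, c (i + 1) * 3 ^ i) + c 0 := by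
  rw [Finset.sum_range_succ', Finset.mul_sum]
  simp only [pow_zero, Nat.mul_one, pow_succ]
  congr 1
  apply Finset.sum_congr rfl
  intro i _
  ring

/-- Extracting base-3 digits from a sum with coefficients `≤ 2`. -/
lemma digit_extract : ∀ (j : ℕ) (c : ℕ → ℕ), (∀ i, c i ≤ 2) → ∀ n, j < n →
    (∑ i ∈ Finset.range n, c i * 3 ^ i) / 3 ^ j % 3 = c j := by
  intro j
  induction j with
  | zero =>
    intro c hc n hn
    obtain ⟨m, rfl⟩ := Nat.exists_eq_add_of_lt hn
    simp only [Nat.zero_add]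
    rw [split0 c m, pow_zero, Nat.div_one, Nat.mul_add_mod]
    exact Nat.mod_eq_of_lt (lt_of_le_of_lt (hc 0) (by norm_num))
  | succ j ih =>
    intro c hc n hn
    obtain ⟨m, rfl⟩ := Nat.exists_eq_add_of_lt hn
    rw [split0 c (j + 1 + m), pow_succ, Nat.mul_comm (3 ^ j) 3, ← Nat.div_div_eq_div_mul,
      Nat.mul_add_div (by norm_num),
      Nat.div_eq_of_lt (lt_of_le_of_lt (hc 0) (by norm_num)), Nat.add_zero]
    exact ih (fun i => c (i + 1)) (fun i => hc (i + 1)) (j + 1 + m) (by omega)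

lemma sum_digits_lt (c : ℕ → ℕ) (hc : ∀ i, c i ≤ 2) (n : ℕ) :
    (∑ i ∈ Finset.range n, c i * 3 ^ i) < 3 ^ n := by
  induction n with
  | zero => simp
  | succ n ih =>
    rw [Finset.sum_range_succ, pow_succ]
    have h2 := hc n
    have h3 : c n * 3 ^ n ≤ 2 * 3 ^ n := Nat.mul_le_mul_right _ h2
    omega

lemma padicDigit_le_two (x : ℤ_[3]) (j : ℕ) : padicDigit x j ≤ 2 :=
  Nat.lt_succ_iff.mp (Nat.mod_lt _ (by norm_num))

lemma appr_eq_sum (x : ℤ_[3]) : ∀ n, x.appr n = ∑ i ∈ Finset.range n, padicDigit x i * 3 ^ i := by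
  intro n
  induction n with
  | zero =>
    have := x.appr_lt 0
    simpa using Nat.lt_one_iff.mp (by simpa using this)
  | succ n ih =>
    have hmono : x.appr n ≤ x.appr (n + 1) := x.appr_mono (Nat.le_succ n)
    obtain ⟨k, hk⟩ := x.dvd_appr_sub_appr n (n + 1) (Nat.le_succ n)
    have heq : x.appr (n + 1) = x.appr n + 3 ^ n * k := by omega
    have hlt : x.appr (n + 1) < 3 ^ (n + 1) := x.appr_lt (n + 1)
    have hk3 : k < 3 := by
      by_contra hk3
      push_neg at hk3
      have : 3 ^ n * 3 ≤ 3 ^ n * k := Nat.mul_le_mul_left _ hk3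
      rw [← pow_succ] at this
      omega
    have hd : padicDigit x n = k := by
      unfold padicDigit
      rw [heq, Nat.add_mul_div_left _ _ (pow_pos (by norm_num) n),
        Nat.div_eq_of_lt (x.appr_lt n), Nat.zero_add, Nat.mod_eq_of_lt hk3]
    rw [Finset.sum_range_succ, ← ih, heq, hd]
    ring

lemma appr_mul_congr (lam : ℤ_[3]) (n : ℕ) :
    (4 * lam).appr n ≡ 4 * lam.appr n [MOD 3 ^ n] := by
  have h1 : (3 : ℤ_[3]) ^ n ∣ (4 * lam - (((4 * lam).appr n : ℕ) : ℤ_[3])) := by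
    have h := PadicInt.appr_spec n (4 * lam)
    rwa [Ideal.mem_span_singleton, show (((3 : ℕ) : ℤ_[3])) = 3 by norm_num] at h
  have h2 : (3 : ℤ_[3]) ^ n ∣ (4 * lam - 4 * ((lam.appr n : ℕ) : ℤ_[3])) := by
    have h := PadicInt.appr_spec n lam
    rw [Ideal.mem_span_singleton, show (((3 : ℕ) : ℤ_[3])) = 3 by norm_num] at h
    have h4 := h.mul_left 4
    rwa [mul_sub] at h4
  have h3 : (3 : ℤ_[3]) ^ n ∣
      ((((4 * lam.appr n : ℕ) : ℤ) - (((4 * lam).appr n : ℕ) : ℤ) : ℤ) : ℤ_[3]) := by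
    have hd := dvd_sub h1 h2
    have e : (4 * lam - (((4 * lam).appr n : ℕ) : ℤ_[3]))
          - (4 * lam - 4 * ((lam.appr n : ℕ) : ℤ_[3]))
        = ((((4 * lam.appr n : ℕ) : ℤ) - (((4 * lam).appr n : ℕ) : ℤ) : ℤ) : ℤ_[3]) := by
      push_cast
      ring
    rwa [e] at hd
  rw [show (3 : ℤ_[3]) = ((3 : ℕ) : ℤ_[3]) by norm_num, PadicInt.pow_p_dvd_int_iff] at h3
  rw [Nat.modEq_iff_dvd]
  exact_mod_cast h3

theorem sigmaA_subset_cantor_one_four (lam : ℤ_[3])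
    (h : ∀ n : ℕ, padicDigit lam (2 * n + 1) = 0 ∧
        (padicDigit lam (2 * n) = 0 ∨ padicDigit lam (2 * n) = 1)) :
    (∀ j, padicDigit lam j ≤ 1) ∧ ∀ j, padicDigit (4 * lam) j ≤ 1 := by
  have part1 : ∀ j, padicDigit lam j ≤ 1 := by
    intro j
    rcases Nat.even_or_odd j with ⟨k, hk⟩ | ⟨k, hk⟩
    · have h2 := (h k).2
      rw [show j = 2 * k by omega]
      omega
    · have h1 := (h k).1
      rw [show j = 2 * k + 1 by omega, h1]
      omega
  refine ⟨part1, ?_⟩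
  intro j
  set d := padicDigit lam with hdef
  let c : ℕ → ℕ := fun i => match i with
    | 0 => d 0
    | (i + 1) => d i + d (i + 1)
  have hc1 : ∀ i, c i ≤ 1 := by
    intro i
    match i with
    | 0 => exact part1 0
    | (i + 1) =>
      show d i + d (i + 1) ≤ 1
      rcases Nat.even_or_odd i with ⟨k, hk⟩ | ⟨k, hk⟩
      · have hodd : d (i + 1) = 0 := by
          have := (h k).1
          rwa [show 2 * k + 1 = i + 1 by omega] at this
        have := part1 i
        omega
      · have hodd : d i = 0 := by
          have := (h k).1
          rwa [show 2 * k + 1 = i by omega] at this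
        have := part1 (i + 1)
        omega
  have hc2 : ∀ i, c i ≤ 2 := fun i => (hc1 i).trans one_le_two
  have key : ∀ m, ∑ i ∈ Finset.range (m + 1), c i * 3 ^ i
      = 4 * (∑ i ∈ Finset.range m, d i * 3 ^ i) + d m * 3 ^ m := by
    intro m
    induction m with
    | zero => simp [c]
    | succ m ih =>
      rw [Finset.sum_range_succ, ih, Finset.sum_range_succ]
      show _ + (d m + d (m + 1)) * 3 ^ (m + 1) = _
      rw [pow_succ]
      ring
  have hdn : d (2 * j + 1) = 0 := (h j).1
  have hAn : 4 * lam.appr (2 * j + 1)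
      = ∑ i ∈ Finset.range (2 * j + 1 + 1), c i * 3 ^ i := by
    rw [appr_eq_sum lam (2 * j + 1), key (2 * j + 1), hdn]
    simp
    rfl
  have hB : (4 * lam).appr (2 * j + 1) = ∑ i ∈ Finset.range (2 * j + 1), c i * 3 ^ i := by
    have hcong := appr_mul_congr lam (2 * j + 1)
    rw [hAn, Finset.sum_range_succ] at hcong
    have htop : c (2 * j + 1) * 3 ^ (2 * j + 1) ≡ 0 [MOD 3 ^ (2 * j + 1)] :=
      (Nat.modEq_zero_iff_dvd).mpr ⟨c (2 * j + 1), Nat.mul_comm _ _⟩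
    have hcong2 : (4 * lam).appr (2 * j + 1)
        ≡ ∑ i ∈ Finset.range (2 * j + 1), c i * 3 ^ i [MOD 3 ^ (2 * j + 1)] := by
      have := (Nat.ModEq.refl (∑ i ∈ Finset.range (2 * j + 1), c i * 3 ^ i)).add htop
      simpa using hcong.trans this
    have hlt1 := (4 * lam).appr_lt (2 * j + 1)
    have hlt2 := sum_digits_lt c hc2 (2 * j + 1)
    unfold Nat.ModEq at hcong2
    rwa [Nat.mod_eq_of_lt hlt1, Nat.mod_eq_of_lt hlt2] at hcong2
  have hE : padicDigit (4 * lam) j = c j := by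
    have hx := digit_extract j (fun i => padicDigit (4 * lam) i)
      (fun i => padicDigit_le_two (4 * lam) i) (2 * j + 1) (by omega)
    rw [← appr_eq_sum (4 * lam) (2 * j + 1), hB] at hx
    rw [← hx]
    exact digit_extract j c hc2 (2 * j + 1) (by omega)
  rw [hE]
  exact hc1 j
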